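/- arXiv:2307.06054 — 3 statements merged into one kernel-verified Lean document; each statement's English description precedes it below -/
import Mathlib

section
/- Let m ≥ 2, 0 ≤ r ≤ 2m, and λ ≥ 1 be integers. If an independent exact r-cover of the grid graph ℤ^m exists, then an independent exact λr-cover of the grid graph ℤ^{λm} exists. Concretely, if S ⊆ ℤ^m is an independent exact r-cover and f : ℤ^{λm} → ℤ^m maps (x_1,…,x_{λm}) to the vector whose k-th coordinate is Σ_{i=λ(k−1)+1}^{λk} x_i, then S' = f^{-1}(S) is an independent exact λr-cover of ℤ^{λm}. -/
/-- Adjacency in the grid graph `ℤ^m`: two vertices are adjacent iff they differ by `±1`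
in exactly one coordinate. -/
def gridAdj (m : ℕ) (x y : Fin m → ℤ) : Prop :=
  ∃ j, (y j = x j + 1 ∨ y j = x j - 1) ∧ ∀ i, i ≠ j → y i = x i

/-- `S ⊆ ℤ^m` is an independent exact `r`-cover if `S` is an independent set in the grid
graph `ℤ^m` and every vertex not in `S` is adjacent to exactly `r` elements of `S`. -/
def IsIndepExactCover (m r : ℕ) (S : Set (Fin m → ℤ)) : Prop :=
  (∀ x ∈ S, ∀ y ∈ S, ¬ gridAdj m x y) ∧
    ∀ x ∉ S, {y | y ∈ S ∧ gridAdj m x y}.ncard = r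

/-- Splitting the coordinates of `ℤ^(L·m)` into `m` consecutive blocks of length `L` and
summing within each block: the `k`-th coordinate of `f x` is the sum of the coordinates
of `x` in the `k`-th block. -/
noncomputable def blockSum (m L : ℕ) (x : Fin (L * m) → ℤ) : Fin m → ℤ :=
  fun k => ∑ i ∈ Finset.univ.filter (fun i : Fin (L * m) => i.val / L = k.val), x i

lemma blockSum_eq_off (m L : ℕ) (x y : Fin (L * m) → ℤ) (j : Fin (L * m))
    (h : ∀ i, i ≠ j → y i = x i) (k : Fin m) :
    blockSum m L y k = blockSum m L x k + (if j.1 / L = k.1 then y j - x j else 0) := by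
  unfold blockSum
  have h1 : ∀ i ∈ Finset.univ.filter (fun i : Fin (L*m) => i.1 / L = k.1),
      y i = x i + (if i = j then y j - x j else 0) := by
    intro i _
    by_cases hij : i = j
    · subst hij; simp
    · rw [h i hij, if_neg hij, add_zero]
  rw [Finset.sum_congr rfl h1, Finset.sum_add_distrib,
    Finset.sum_ite_eq' _ j (fun _ => y j - x j)]
  simp [Finset.mem_filter]

lemma gridAdj_blockSum (m L : ℕ) (x y : Fin (L * m) → ℤ)
    (h : gridAdj (L * m) x y) : gridAdj m (blockSum m L x) (blockSum m L y) := by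
  obtain ⟨j, hj1, hj2⟩ := h
  refine ⟨⟨j.1 / L, Nat.div_lt_of_lt_mul j.2⟩, ?_, ?_⟩
  · rw [blockSum_eq_off m L x y j hj2, if_pos rfl]
    rcases hj1 with h | h <;> [left; right] <;> rw [h] <;> ring
  · intro i hi
    rw [blockSum_eq_off m L x y j hj2, if_neg, add_zero]
    intro hc
    exact hi (Fin.ext hc.symm)

lemma card_blk_fiber (m L : ℕ) (hL : 1 ≤ L) (k : Fin m) :
    (Finset.univ.filter (fun j : Fin (L * m) => j.1 / L = k.1)).card = L := by
  have hbound : ∀ t : Fin L, k.1 * L + t.1 < L * m := by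
    intro t
    have h1 : k.1 * L + t.1 < (k.1 + 1) * L := by
      rw [Nat.add_mul, Nat.one_mul]; exact Nat.add_lt_add_left t.2 _
    have h2 : (k.1 + 1) * L ≤ m * L := Nat.mul_le_mul_right L k.2
    rw [Nat.mul_comm L m]; exact h1.trans_le h2
  have key : (Finset.univ.filter (fun j : Fin (L * m) => j.1 / L = k.1)).card
      = (Finset.univ : Finset (Fin L)).card := by
    apply Finset.card_bij' (fun j _ => (⟨j.1 % L, Nat.mod_lt _ hL⟩ : Fin L))
      (fun t _ => (⟨k.1 * L + t.1, hbound t⟩ : Fin (L * m)))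
    · intro a ha; simp
    · intro t _
      simp only [Finset.mem_filter, Finset.mem_univ, true_and]
      have ht := t.2
      rw [Nat.add_comm, Nat.mul_comm, Nat.add_mul_div_left _ _ (by omega : 0 < L),
        Nat.div_eq_of_lt ht, Nat.zero_add]
    · intro a ha
      simp only [Finset.mem_filter, Finset.mem_univ, true_and] at ha
      apply Fin.ext
      show ↑k * L + a.1 % L = a.1
      rw [← ha]
      exact Nat.div_add_mod' a.1 L
    · intro t _
      apply Fin.ext
      show (↑k * L + t.1) % L = t.1
      rw [Nat.add_comm, Nat.add_mul_mod_self_right]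
      exact Nat.mod_eq_of_lt t.2
  rw [key, Finset.card_univ, Fintype.card_fin]

def blk (m L : ℕ) (j : Fin (L * m)) : Fin m := ⟨j.1 / L, Nat.div_lt_of_lt_mul j.2⟩

lemma blk_val (m L : ℕ) (j : Fin (L * m)) : (blk m L j).1 = j.1 / L := rfl


/-- If `S ⊆ ℤ^m` is an independent exact `r`-cover, then its preimage under the
block-sum map is an independent exact `L·r`-cover of `ℤ^(L·m)`. -/
theorem cover_scaling (m r L : ℕ) (hm : 2 ≤ m) (hr : r ≤ 2 * m) (hL : 1 ≤ L)
    (S : Set (Fin m → ℤ)) (hS : IsIndepExactCover m r S) :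
    IsIndepExactCover (L * m) (L * r) (blockSum m L ⁻¹' S) := by
  unfold IsIndepExactCover at hS ⊢
  classical
  obtain ⟨hind, hcov⟩ := hS
  constructor
  · intro y1 h1 y2 h2 hadj
    exact hind _ h1 _ h2 (gridAdj_blockSum m L y1 y2 hadj)
  · intro x hx
    set fx := blockSum m L x with hfxdef
    have hT : {z | z ∈ S ∧ gridAdj m fx z}.ncard = r := hcov fx hx
    have hTfin : {z | z ∈ S ∧ gridAdj m fx z}.Finite := by
      apply Set.Finite.subset (Set.finite_range
        (fun p : Fin m × Bool =>
          Function.update fx p.1 (if p.2 then fx p.1 + 1 else fx p.1 - 1)))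
      rintro z ⟨hz, j, hj1, hj2⟩
      rcases hj1 with h | h
      · refine ⟨(j, true), funext fun i => ?_⟩
        by_cases hij : i = j
        · subst hij; simp [Function.update, h.symm]
        · simp only [Function.update, if_neg hij, dif_neg hij]
          exact (hj2 i hij).symm
      · refine ⟨(j, false), funext fun i => ?_⟩
        by_cases hij : i = j
        · subst hij; simp [Function.update, h.symm]
        · simp only [Function.update, if_neg hij, dif_neg hij]
          exact (hj2 i hij).symm
    set Tf := hTfin.toFinset with hTfdef
    have hTf : Tf.card = r := by
      rw [hTfdef, ← Set.ncard_eq_toFinset_card _ hTfin]; exact hT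
    set P : Finset (Fin (L * m) × (Fin m → ℤ)) :=
      Tf.biUnion (fun z =>
        (Finset.univ.filter (fun j : Fin (L * m) => z (blk m L j) ≠ fx (blk m L j))).image
          (fun j => (j, z))) with hPdef
    set G : Fin (L * m) × (Fin m → ℤ) → (Fin (L * m) → ℤ) :=
      fun p i => if i = p.1 then x i + (p.2 (blk m L p.1) - fx (blk m L p.1)) else x i with hGdef
    have hGdiff : ∀ j z i, i ≠ j → G (j, z) i = x i := fun j z i hi => if_neg hi
    have hGj : ∀ j z, G (j, z) j = x j + (z (blk m L j) - fx (blk m L j)) :=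
      fun j z => if_pos rfl
    -- block sum of G (j, z) is z
    have hGBS : ∀ (j : Fin (L * m)) (z : Fin m → ℤ), gridAdj m fx z →
        z (blk m L j) ≠ fx (blk m L j) → blockSum m L (G (j, z)) = z := by
      intro j z hadj hneq
      obtain ⟨kz, hk1, hk2⟩ := hadj
      have hKj : blk m L j = kz := by
        by_contra hc
        exact hneq (hk2 _ hc)
      funext k
      rw [blockSum_eq_off m L x (G (j, z)) j (fun i hi => hGdiff j z i hi) k]
      by_cases hk : blk m L j = k
      · rw [if_pos (by rw [← blk_val, hk]), hGj, hk]
        ring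
      · have hcond : ¬ (j.1 / L = k.1) :=
          fun hc' => hk (Fin.ext (show (blk m L j).1 = k.1 from hc'))
        rw [if_neg hcond, add_zero]
        refine (hk2 k fun hkk => hk (hKj.trans hkk.symm)).symm
    have hGadj : ∀ (j : Fin (L * m)) (z : Fin m → ℤ), gridAdj m fx z →
        z (blk m L j) ≠ fx (blk m L j) → gridAdj (L * m) x (G (j, z)) := by
      intro j z hadj hneq
      obtain ⟨kz, hk1, hk2⟩ := hadj
      have hKj : blk m L j = kz := by
        by_contra hc
        exact hneq (hk2 _ hc)
      refine ⟨j, ?_, fun i hi => hGdiff j z i hi⟩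
      rw [hGj, hKj]
      rcases hk1 with h | h <;> [left; right] <;> rw [h] <;> ring
    have hPcard : P.card = L * r := by
      rw [hPdef, Finset.card_biUnion]
      · have hone : ∀ z ∈ Tf,
            ((Finset.univ.filter
              (fun j : Fin (L * m) => z (blk m L j) ≠ fx (blk m L j))).image
                (fun j => (j, z))).card = L := by
          intro z hz
          obtain ⟨hzS, kz, hk1, hk2⟩ := (Set.Finite.mem_toFinset hTfin).mp hz
          have hne : z kz ≠ fx kz := by
            rcases hk1 with h | h <;> rw [h] <;> intro hc <;> omega
          rw [Finset.card_image_of_injective _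
            (fun a b hab => congrArg Prod.fst hab : Function.Injective (fun j => (j, z)))]
          rw [show (Finset.univ.filter
              (fun j : Fin (L * m) => z (blk m L j) ≠ fx (blk m L j)))
            = Finset.univ.filter (fun j : Fin (L * m) => j.1 / L = kz.1) from ?_,
            card_blk_fiber m L hL kz]
          apply Finset.filter_congr
          intro j _
          constructor
          · intro h
            have : blk m L j = kz := by
              by_contra hc
              exact h (hk2 _ hc)
            rw [← blk_val, this]
          · intro h
            have : blk m L j = kz := Fin.ext h
            rw [this]
            exact hne
        rw [Finset.sum_congr rfl hone, Finset.sum_const, smul_eq_mul, hTf, Nat.mul_comm]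
      · intro z1 h1 z2 h2 hne
        rw [Function.onFun, Finset.disjoint_left]
        intro p hp1 hp2
        obtain ⟨j1, _, rfl⟩ := Finset.mem_image.mp hp1
        obtain ⟨j2, _, h22⟩ := Finset.mem_image.mp hp2
        exact hne (congrArg Prod.snd h22).symm
    have hBeq : {y | y ∈ blockSum m L ⁻¹' S ∧ gridAdj (L * m) x y} = ↑(P.image G) := by
      ext y
      simp only [Set.mem_setOf_eq, Finset.coe_image, Set.mem_image, Finset.mem_coe]
      constructor
      · rintro ⟨hyS, jy, hy1, hy2⟩
        have hadjf : gridAdj m fx (blockSum m L y) :=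
          gridAdj_blockSum m L x y ⟨jy, hy1, hy2⟩
        have hyT : blockSum m L y ∈ Tf :=
          (Set.Finite.mem_toFinset hTfin).mpr ⟨hyS, hadjf⟩
        have hval : blockSum m L y (blk m L jy)
            = fx (blk m L jy) + (y jy - x jy) := by
          rw [blockSum_eq_off m L x y jy hy2, if_pos (blk_val m L jy).symm]
        have hneq : blockSum m L y (blk m L jy) ≠ fx (blk m L jy) := by
          rw [hval]
          rcases hy1 with h | h <;> rw [h] <;> intro hc <;> omega
        refine ⟨(jy, blockSum m L y), ?_, ?_⟩
        · rw [hPdef]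
          refine Finset.mem_biUnion.mpr ⟨blockSum m L y, hyT, Finset.mem_image.mpr
            ⟨jy, Finset.mem_filter.mpr ⟨Finset.mem_univ _, hneq⟩, rfl⟩⟩
        · funext i
          by_cases hij : i = jy
          · subst hij
            rw [hGj, hval]
            rcases hy1 with h | h <;> rw [h] <;> ring
          · rw [hGdiff _ _ i hij, hy2 i hij]
      · rintro ⟨p, hp, rfl⟩
        rw [hPdef] at hp
        obtain ⟨z, hzTf, hp2⟩ := Finset.mem_biUnion.mp hp
        obtain ⟨j, hjf, rfl⟩ := Finset.mem_image.mp hp2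
        obtain ⟨hzS, hzadj⟩ := (Set.Finite.mem_toFinset hTfin).mp hzTf
        have hneq := (Finset.mem_filter.mp hjf).2
        constructor
        · show blockSum m L (G (j, z)) ∈ S
          rw [hGBS j z hzadj hneq]
          exact hzS
        · exact hGadj j z hzadj hneq
    have hInj : Set.InjOn G ↑P := by
      intro p hp q hq heq
      rw [hPdef, Finset.coe_biUnion] at hp hq
      simp only [Set.mem_iUnion, Finset.mem_coe, Finset.coe_image, Set.mem_image] at hp hq
      obtain ⟨z1, hz1, j1, hj1, rfl⟩ := hp
      obtain ⟨z2, hz2, j2, hj2, rfl⟩ := hq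
      obtain ⟨hz1S, hz1adj⟩ := (Set.Finite.mem_toFinset hTfin).mp hz1
      obtain ⟨hz2S, hz2adj⟩ := (Set.Finite.mem_toFinset hTfin).mp hz2
      have hn1 := (Finset.mem_filter.mp hj1).2
      have hn2 := (Finset.mem_filter.mp hj2).2
      have hjj : j1 = j2 := by
        by_contra hc
        have h1 : G (j1, z1) j1 = x j1 + (z1 (blk m L j1) - fx (blk m L j1)) := hGj _ _
        have h2 : G (j2, z2) j1 = x j1 := hGdiff _ _ _ hc
        rw [heq, h2] at h1
        exact hn1 (by omega : z1 (blk m L j1) = fx (blk m L j1))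
      subst hjj
      have hz : z1 = z2 := by
        rw [← hGBS j1 z1 hz1adj hn1, ← hGBS j1 z2 hz2adj hn2, heq]
      rw [hz]
    rw [hBeq, Set.ncard_coe_finset, Finset.card_image_of_injOn hInj, hPcard]
end

section
/- For every m ≥ 2 and every integer r with m < r < 2m, there is no independent exact r-cover of the grid graph ℤ^m: there is no set S ⊆ ℤ^m that is independent and such that every vertex not in S has exactly r neighbours in S. -/
namespace NoCoverAux

/-- sign of a boolean -/
def sgn (b : Bool) : ℤ := if b then 1 else -1

lemma sgn_ne_zero (b : Bool) : sgn b ≠ 0 := by cases b <;> simp [sgn]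

/-- move one step from `x` in coordinate `p.1`, direction `p.2` -/
def mv (m : ℕ) (x : Fin m → ℤ) (p : Fin m × Bool) : Fin m → ℤ :=
  Function.update x p.1 (x p.1 + sgn p.2)

lemma mv_apply_self (m : ℕ) (x : Fin m → ℤ) (p : Fin m × Bool) :
    mv m x p p.1 = x p.1 + sgn p.2 := by simp [mv]

lemma mv_apply_ne (m : ℕ) (x : Fin m → ℤ) (p : Fin m × Bool) {i : Fin m} (h : i ≠ p.1) :
    mv m x p i = x i := by simp [mv, Function.update_of_ne h]

lemma adj_mv (m : ℕ) (x : Fin m → ℤ) (p : Fin m × Bool) : gridAdj m x (mv m x p) := by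
  refine ⟨p.1, ?_, fun i hi => mv_apply_ne m x p hi⟩
  rw [mv_apply_self]
  cases p.2 <;> simp [sgn] <;> ring

lemma adj_iff (m : ℕ) (x y : Fin m → ℤ) :
    gridAdj m x y ↔ ∃ p : Fin m × Bool, y = mv m x p := by
  constructor
  · rintro ⟨j, hj | hj, hoth⟩
    · refine ⟨(j, true), funext fun i => ?_⟩
      by_cases hij : i = j
      · subst hij; rw [mv_apply_self]; simpa [sgn] using hj
      · rw [mv_apply_ne m x _ hij]; exact hoth i hij
    · refine ⟨(j, false), funext fun i => ?_⟩
      by_cases hij : i = j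
      · subst hij; rw [mv_apply_self]; simp [sgn]; linarith [hj]
      · rw [mv_apply_ne m x _ hij]; exact hoth i hij
  · rintro ⟨p, rfl⟩; exact adj_mv m x p

lemma mv_inj (m : ℕ) (x : Fin m → ℤ) {p q : Fin m × Bool} (h : mv m x p = mv m x q) :
    p = q := by
  have h1 : p.1 = q.1 := by
    by_contra hne
    have := congrFun h p.1
    rw [mv_apply_self, mv_apply_ne m x q (by simpa using hne)] at this
    exact sgn_ne_zero p.2 (by linarith)
  have := congrFun h p.1
  rw [mv_apply_self, h1, mv_apply_self] at this
  have h2 : p.2 = q.2 := by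
    cases hp : p.2 <;> cases hq : q.2 <;> simp [hp, hq, sgn] at this ⊢ <;> omega
  exact Prod.ext h1 h2

lemma sum_mv (m : ℕ) (x : Fin m → ℤ) (p : Fin m × Bool) :
    (∑ i, mv m x p i) = (∑ i, x i) + sgn p.2 := by
  classical
  rw [show (∑ i, mv m x p i) = ∑ i, Function.update x p.1 (x p.1 + sgn p.2) i from rfl,
    Finset.sum_update_of_mem (Finset.mem_univ p.1),
    ← Finset.sum_erase_add _ _ (Finset.mem_univ p.1), Finset.erase_eq]
  ring

/-- no vertex is simultaneously a neighbour of `x` and of a neighbour of `x` -/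
lemma no_common (m : ℕ) (x : Fin m → ℤ) (q p p' : Fin m × Bool) :
    mv m x p ≠ mv m (mv m x q) p' := by
  intro h
  have := congrArg (fun y : Fin m → ℤ => ∑ i, y i) h
  simp only [sum_mv] at this
  cases hp : p.2 <;> cases hq : q.2 <;> cases hp' : p'.2 <;>
    simp [hp, hq, hp', sgn] at this <;> omega

/-- cross adjacency: moving `x` and `w = mv x (i,c)` in the same other direction gives
adjacent vertices. -/
lemma cross_adj (m : ℕ) (x : Fin m → ℤ) (i : Fin m) (c : Bool) (p : Fin m × Bool)
    (hne : p.1 ≠ i) : gridAdj m (mv m x p) (mv m (mv m x (i, c)) p) := by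
  refine ⟨i, ?_, fun k hk => ?_⟩
  · have h1 : mv m (mv m x (i, c)) p i = (mv m x (i, c)) i := mv_apply_ne m _ p hne.symm
    have h2 : (mv m x (i, c)) i = x i + sgn c := mv_apply_self m x (i, c)
    have h3 : mv m x p i = x i := mv_apply_ne m x p hne.symm
    rw [h1, h2, h3]
    cases c <;> simp [sgn] <;> ring
  · by_cases hkp : k = p.1
    · subst hkp
      rw [mv_apply_self, mv_apply_self, mv_apply_ne m x (i, c) hne]
    · rw [mv_apply_ne m _ p hkp, mv_apply_ne m x p hkp, mv_apply_ne m x (i, c) hk]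

lemma mv_back (m : ℕ) (x : Fin m → ℤ) (i : Fin m) (c : Bool) :
    mv m (mv m x (i, c)) (i, !c) = x := by
  funext k
  by_cases hk : k = i
  · subst hk
    cases c <;> simp [mv, sgn] <;> omega
  · rw [mv_apply_ne m _ (i, !c) hk, mv_apply_ne m _ (i, c) hk]

lemma main (m r : ℕ) (hm : 2 ≤ m) (h1 : m < r) (h2 : r < 2 * m)
    (S : Set (Fin m → ℤ)) (hS : IsIndepExactCover m r S)
    (x : Fin m → ℤ) (hx : x ∉ S) : False := by
  classical
  obtain ⟨hind, hcnt⟩ := hS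
  set N : (Fin m → ℤ) → Set (Fin m → ℤ) := fun z => {y | y ∈ S ∧ gridAdj m z y} with hN
  have hNsub : ∀ z, N z ⊆ Set.range (mv m z) := by
    rintro z y ⟨_, hadj⟩
    obtain ⟨p, rfl⟩ := (adj_iff m z y).1 hadj
    exact ⟨p, rfl⟩
  have hNfin : ∀ z, (N z).Finite := fun z =>
    Set.Finite.subset (Set.finite_range _) (hNsub z)
  have hcard2m : Nat.card (Fin m × Bool) = 2 * m := by
    simp [Nat.card_eq_fintype_card]; ring
  -- find a neighbour of x outside S
  have hw : ∃ q : Fin m × Bool, mv m x q ∉ S := by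
    by_contra hcon
    push_neg at hcon
    have hsub : Set.range (mv m x) ⊆ N x := by
      rintro y ⟨p, rfl⟩
      exact ⟨hcon p, adj_mv m x p⟩
    have hrange : (Set.range (mv m x)).ncard = 2 * m := by
      rw [← Set.image_univ, Set.ncard_image_of_injective _ (fun p q h => mv_inj m x h),
        Set.ncard_univ, hcard2m]
    have := Set.ncard_le_ncard hsub (hNfin x)
    rw [hrange, hcnt x hx] at this
    omega
  obtain ⟨⟨i, c⟩, hwS⟩ := hw
  set w : Fin m → ℤ := mv m x (i, c) with hwdef
  -- the two neighbourhoods are disjoint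
  have hdisj : Disjoint (N x) (N w) := by
    rw [Set.disjoint_left]
    rintro y ⟨_, hax⟩ ⟨_, haw⟩
    obtain ⟨p, hp⟩ := (adj_iff m x y).1 hax
    obtain ⟨p', hp'⟩ := (adj_iff m w y).1 haw
    exact no_common m x (i, c) p p' (hp.symm.trans hp')
  have huni : (N x ∪ N w).ncard = 2 * r := by
    rw [Set.ncard_union_eq hdisj (hNfin x) (hNfin w), hcnt x hx, hcnt w hwS]
    ring
  -- the injection into Fin m × Bool
  have hex : ∀ y ∈ N x ∪ N w, ∃ p : Fin m × Bool, y = mv m x p ∨ y = mv m w p := by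
    intro y hy
    rcases hy with ⟨_, hadj⟩ | ⟨_, hadj⟩
    · obtain ⟨p, hp⟩ := (adj_iff m x y).1 hadj
      exact ⟨p, Or.inl hp⟩
    · obtain ⟨p, hp⟩ := (adj_iff m w y).1 hadj
      exact ⟨p, Or.inr hp⟩
  set F : (Fin m → ℤ) → Fin m × Bool := fun y =>
    if h : ∃ p : Fin m × Bool, y = mv m x p ∨ y = mv m w p then h.choose
    else (⟨0, by omega⟩, true)
  have hFspec : ∀ y ∈ N x ∪ N w, y = mv m x (F y) ∨ y = mv m w (F y) := by
    intro y hy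
    have h := hex y hy
    simp only [F, dif_pos h]
    exact h.choose_spec
  -- mixed case lemma
  have hmix : ∀ (p : Fin m × Bool) (y y' : Fin m → ℤ), y ∈ S → y' ∈ S →
      y = mv m x p → y' = mv m w p → False := by
    rintro ⟨j, b⟩ y y' hyS hy'S rfl rfl
    by_cases hji : j = i
    · by_cases hbc : b = c
      · apply hwS
        rw [hwdef, ← hji, ← hbc]
        exact hyS
      · have hb : b = !c := by cases b <;> cases c <;> simp_all
        rw [hji, hb, hwdef, mv_back m x i c] at hy'S
        exact hx hy'S
    · exact hind _ hyS _ hy'S (cross_adj m x i c (j, b) hji)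
  have hinj : Set.InjOn F (N x ∪ N w) := by
    intro y hy y' hy' heq
    have hyS : y ∈ S := by rcases hy with ⟨h, _⟩ | ⟨h, _⟩ <;> exact h
    have hy'S : y' ∈ S := by rcases hy' with ⟨h, _⟩ | ⟨h, _⟩ <;> exact h
    rcases hFspec y hy with hs | hs <;> rcases hFspec y' hy' with hs' | hs'
    · rw [hs, hs', heq]
    · rw [← heq] at hs'
      exact (hmix (F y) y y' hyS hy'S hs hs').elim
    · rw [← heq] at hs'
      exact (hmix (F y) y' y hy'S hyS hs' hs).elim
    · rw [hs, hs', heq]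
  have hle : (N x ∪ N w).ncard ≤ (Set.univ : Set (Fin m × Bool)).ncard :=
    Set.ncard_le_ncard_of_injOn F (fun a _ => Set.mem_univ _) hinj (Set.finite_univ)
  rw [huni, Set.ncard_univ, hcard2m] at hle
  omega

end NoCoverAux

/-- For every `m ≥ 2` and every `r` with `m < r < 2m`, there is no independent exact
`r`-cover of the grid graph `ℤ^m`. -/
theorem no_cover_between_m_and_two_m (m r : ℕ) (hm : 2 ≤ m) (h1 : m < r) (h2 : r < 2 * m) :
    ¬ ∃ S : Set (Fin m → ℤ), IsIndepExactCover m r S := by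
  rintro ⟨S, hS⟩
  by_cases h0 : (fun _ => 0 : Fin m → ℤ) ∈ S
  · set x : Fin m → ℤ := NoCoverAux.mv m (fun _ => 0) (⟨0, by omega⟩, true) with hxdef
    have hx : x ∉ S := fun hx =>
      hS.1 _ h0 _ hx (NoCoverAux.adj_mv m _ _)
    exact NoCoverAux.main m r hm h1 h2 S hS x hx
  · exact NoCoverAux.main m r hm h1 h2 S hS _ h0
end

section
/- The set S = { (x_1,x_2,x_3) ∈ ℤ³ : x_1 ≡ x_2 ≡ x_3 (mod 2) } of points of ℤ³ whose three coordinates are either all even or all odd is an independent exact 2-cover of the grid graph ℤ³: S is an independent set and every vertex of ℤ³ not in S has exactly two neighbours in S. -/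
lemma fin3_third : ∀ j k : Fin 3, j ≠ k → ∃ i : Fin 3, i ≠ j ∧ i ≠ k := by decide

lemma pair_eq (x : Fin 3 → ℤ) (j : Fin 3)
    (hmin : ∀ i, i ≠ j → (Even (x i) ↔ ¬ Even (x j))) :
    {y | y ∈ {z : Fin 3 → ℤ | (∀ i, Even (z i)) ∨ (∀ i, Odd (z i))} ∧ gridAdj 3 x y}
      = {Function.update x j (x j + 1), Function.update x j (x j - 1)} := by
  have hmem : ∀ c : ℤ, (Even c ↔ ¬ Even (x j)) →
      Function.update x j c ∈ {z : Fin 3 → ℤ | (∀ i, Even (z i)) ∨ (∀ i, Odd (z i))} := by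
    intro c hc
    by_cases hj : Even (x j)
    · right
      intro i
      rw [← Int.not_even_iff_odd]
      by_cases hij : i = j
      · subst hij; rw [Function.update_self]; exact fun h => (hc.mp h) hj
      · rw [Function.update_of_ne hij]; exact fun h => (hmin i hij).mp h hj
    · left
      intro i
      by_cases hij : i = j
      · subst hij; rw [Function.update_self]; exact hc.mpr hj
      · rw [Function.update_of_ne hij]; exact (hmin i hij).mpr hj
  have hadj : ∀ c : ℤ, (c = x j + 1 ∨ c = x j - 1) → gridAdj 3 x (Function.update x j c) := by
    intro c hc
    exact ⟨j, by simpa using hc, fun i hi => Function.update_of_ne hi _ _⟩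
  ext y
  constructor
  · rintro ⟨hyS, k, hk, hother⟩
    have hkj : k = j := by
      by_contra hkj
      obtain ⟨i, hij, hik⟩ := fin3_third j k (fun h => hkj h.symm)
      have h1 : y i = x i := hother i hik
      have h2 : y j = x j := hother j (fun h => hkj h.symm)
      rcases hyS with hall | hall
      · exact (hmin i hij).mp (h1 ▸ hall i) (h2 ▸ hall j)
      · have hoi : Odd (x i) := h1 ▸ hall i
        have hoj : Odd (x j) := h2 ▸ hall j
        exact Int.not_even_iff_odd.mpr hoi ((hmin i hij).mpr (Int.not_even_iff_odd.mpr hoj))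
    subst hkj
    have hy : y = Function.update x k (y k) := by
      funext i
      by_cases hik : i = k
      · subst hik; simp
      · rw [Function.update_of_ne hik]; exact hother i hik
    rcases hk with h | h
    · left; rw [hy, h]
    · right; rw [hy, h]; rfl
  · rintro (rfl | rfl)
    · exact ⟨hmem _ (by rw [Int.even_add_one]), hadj _ (Or.inl rfl)⟩
    · exact ⟨hmem _ (by rw [Int.even_sub_one]), hadj _ (Or.inr rfl)⟩

lemma count_two (x : Fin 3 → ℤ) (j : Fin 3)
    (hmin : ∀ i, i ≠ j → (Even (x i) ↔ ¬ Even (x j))) :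
    {y | y ∈ {z : Fin 3 → ℤ | (∀ i, Even (z i)) ∨ (∀ i, Odd (z i))} ∧ gridAdj 3 x y}.ncard = 2 := by
  rw [pair_eq x j hmin]
  apply Set.ncard_pair
  intro h
  have := congrFun h j
  simp at this
  omega

/-- The set of points of `ℤ³` whose three coordinates are all even or all odd is an
independent exact `2`-cover of the grid graph `ℤ³`. -/
theorem all_even_or_all_odd_cover :
    IsIndepExactCover 3 2
      {x : Fin 3 → ℤ | (∀ i, Even (x i)) ∨ (∀ i, Odd (x i))} := by
  constructor
  · rintro x hx y hy ⟨j, hj, hother⟩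
    have hex : ∀ j : Fin 3, ∃ i : Fin 3, i ≠ j := by decide
    obtain ⟨i, hij⟩ := hex j
    have hyi : y i = x i := hother i hij
    have hpar : ¬ (Even (y j) ↔ Even (x j)) := by
      rcases hj with h | h <;> rw [h]
      · rw [Int.even_add_one]; tauto
      · rw [Int.even_sub_one]; tauto
    have hx2 : Even (x i) ↔ Even (x j) := by
      rcases hx with h | h
      · exact iff_of_true (h i) (h j)
      · exact iff_of_false (Int.not_even_iff_odd.mpr (h i)) (Int.not_even_iff_odd.mpr (h j))
    have hy2 : Even (y i) ↔ Even (y j) := by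
      rcases hy with h | h
      · exact iff_of_true (h i) (h j)
      · exact iff_of_false (Int.not_even_iff_odd.mpr (h i)) (Int.not_even_iff_odd.mpr (h j))
    exact hpar ((hy2.symm.trans (by rw [hyi])).trans hx2)
  · intro x hx
    rcases Int.even_or_odd (x 0) with h0 | h0 <;>
      rcases Int.even_or_odd (x 1) with h1 | h1 <;>
      rcases Int.even_or_odd (x 2) with h2 | h2
    · exact absurd (Or.inl (fun i => by fin_cases i <;> assumption)) hx
    · exact count_two x 2 (fun i hi => by fin_cases i <;> simp_all [Int.not_even_iff_odd])
    · exact count_two x 1 (fun i hi => by fin_cases i <;> simp_all [Int.not_even_iff_odd])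
    · exact count_two x 0 (fun i hi => by fin_cases i <;> simp_all [Int.not_even_iff_odd])
    · exact count_two x 0 (fun i hi => by fin_cases i <;> simp_all [Int.not_even_iff_odd])
    · exact count_two x 1 (fun i hi => by fin_cases i <;> simp_all [Int.not_even_iff_odd])
    · exact count_two x 2 (fun i hi => by fin_cases i <;> simp_all [Int.not_even_iff_odd])
    · exact absurd (Or.inr (fun i => by fin_cases i <;> assumption)) hx
end
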